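/- Let U be a unitary N×N complex matrix, L₀ an N×N complex matrix, and D a natural number. Then the Frobenius norm of the commutator of U with the Cesàro average L_D := (1/(D+1)) · Σ_{d=0}^{D} Uᵈ · L₀ · (U†)ᵈ satisfies ‖U·L_D − L_D·U‖_F ≤ (2/(D+1)) · ‖L₀‖_F. -/

import Mathlib

open Matrix BigOperators

/-- Frobenius norm of a square complex matrix: `‖A‖_F = √(Tr(A†A))`. -/
noncomputable def frobNorm {n : Type*} [Fintype n] (A : Matrix n n ℂ) : ℝ :=
  Real.sqrt (Matrix.trace (Aᴴ * A)).re

/-- Cesàro average `L_D = (1/(D+1)) ∑_{d=0}^{D} Uᵈ L₀ (U†)ᵈ`. -/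
noncomputable def cesaroAvg {N : ℕ} (U L₀ : Matrix (Fin N) (Fin N) ℂ) (D : ℕ) :
    Matrix (Fin N) (Fin N) ℂ :=
  ((D : ℂ) + 1)⁻¹ • ∑ d ∈ Finset.range (D + 1), U ^ d * L₀ * (Uᴴ) ^ d

attribute [local instance] Matrix.frobeniusNormedAddCommGroup Matrix.frobeniusNormedSpace

lemma frobNorm_eq_norm {n : Type*} [Fintype n] (A : Matrix n n ℂ) :
    frobNorm A = ‖A‖ := by
  rw [frobNorm, Matrix.frobenius_norm_def, Real.sqrt_eq_rpow]
  congr 1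
  rw [Matrix.trace, Complex.re_sum]
  rw [Finset.sum_comm]
  congr 1; ext i
  simp only [Matrix.diag_apply, Matrix.mul_apply, Matrix.conjTranspose_apply,
    Complex.re_sum]
  congr 1; ext j
  simp [Complex.mul_re, Complex.sq_norm, Complex.normSq_apply]

lemma frob_mul_right {n : Type*} [Fintype n] [DecidableEq n]
    (A V : Matrix n n ℂ) (hV : V * Vᴴ = 1) :
    frobNorm (A * V) = frobNorm A := by
  rw [frobNorm, frobNorm, Matrix.conjTranspose_mul,
    show Vᴴ * Aᴴ * (A * V) = Vᴴ * (Aᴴ * A) * V by noncomm_ring,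
    Matrix.trace_mul_cycle, ← Matrix.mul_assoc, hV, Matrix.one_mul]

lemma frob_mul_left {n : Type*} [Fintype n] [DecidableEq n]
    (A V : Matrix n n ℂ) (hV : Vᴴ * V = 1) :
    frobNorm (V * A) = frobNorm A := by
  rw [frobNorm, frobNorm, Matrix.conjTranspose_mul,
    show Aᴴ * Vᴴ * (V * A) = Aᴴ * (Vᴴ * V) * A by noncomm_ring, hV,
    Matrix.mul_one]

theorem cesaro_average_commutator_norm_bound {N : ℕ}
    (U L₀ : Matrix (Fin N) (Fin N) ℂ) (hU : Uᴴ * U = 1) (D : ℕ) :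
    frobNorm (U * cesaroAvg U L₀ D - cesaroAvg U L₀ D * U) ≤
      (2 / (D + 1)) * frobNorm L₀ := by
  have hU' : U * Uᴴ = 1 := mul_eq_one_comm.mp hU
  have hpow : ∀ k : ℕ, (Uᴴ) ^ k * U ^ k = 1 := by
    intro k
    induction k with
    | zero => simp
    | succ k ih =>
      rw [pow_succ, pow_succ', Matrix.mul_assoc, ← Matrix.mul_assoc Uᴴ, hU,
        Matrix.one_mul, ih]
  have hpow' : ∀ k : ℕ, U ^ k * (Uᴴ) ^ k = 1 := by
    intro k
    induction k with
    | zero => simp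
    | succ k ih =>
      rw [pow_succ', pow_succ, Matrix.mul_assoc, ← Matrix.mul_assoc (U ^ k), ih,
        Matrix.one_mul, hU']
  set c : ℂ := ((D : ℂ) + 1)⁻¹ with hc
  set S : Matrix (Fin N) (Fin N) ℂ :=
    ∑ d ∈ Finset.range (D + 1), U ^ d * L₀ * (Uᴴ) ^ d with hS
  have hUSU : U * S * Uᴴ - S = U ^ (D + 1) * L₀ * (Uᴴ) ^ (D + 1) - L₀ := by
    have : U * S * Uᴴ = ∑ d ∈ Finset.range (D + 1),
        U ^ (d + 1) * L₀ * (Uᴴ) ^ (d + 1) := by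
      rw [hS, Matrix.mul_sum, Matrix.sum_mul]
      congr 1; ext d
      rw [pow_succ' U, pow_succ Uᴴ]
      noncomm_ring
    rw [this, hS, ← Finset.sum_sub_distrib,
      Finset.sum_range_sub (fun d => U ^ d * L₀ * (Uᴴ) ^ d)]
    simp
  have key : U * cesaroAvg U L₀ D - cesaroAvg U L₀ D * U =
      (c • (U ^ (D + 1) * L₀ * (Uᴴ) ^ (D + 1) - L₀)) * U := by
    rw [cesaroAvg, ← hc, ← hS, Matrix.smul_mul, Matrix.mul_smul, ← smul_sub,
      ← hUSU, Matrix.smul_mul]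
    congr 1
    rw [Matrix.sub_mul, Matrix.mul_assoc (U * S), hU, Matrix.mul_one]
  rw [key, frob_mul_right _ _ hU']
  rw [frobNorm_eq_norm, frobNorm_eq_norm, norm_smul]
  have hcnorm : ‖c‖ = ((D : ℝ) + 1)⁻¹ := by
    rw [hc, norm_inv]
    congr 1
    rw [show ((D : ℂ) + 1) = ((D + 1 : ℕ) : ℂ) by push_cast; ring,
      Complex.norm_natCast]
    push_cast; ring
  rw [hcnorm]
  have htri : ‖U ^ (D + 1) * L₀ * (Uᴴ) ^ (D + 1) - L₀‖ ≤ 2 * ‖L₀‖ := by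
    calc ‖U ^ (D + 1) * L₀ * (Uᴴ) ^ (D + 1) - L₀‖
        ≤ ‖U ^ (D + 1) * L₀ * (Uᴴ) ^ (D + 1)‖ + ‖L₀‖ := norm_sub_le _ _
      _ = ‖L₀‖ + ‖L₀‖ := by
          rw [← frobNorm_eq_norm, ← frobNorm_eq_norm L₀, Matrix.mul_assoc,
            frob_mul_left _ _ (by rw [conjTranspose_pow]; exact hpow _),
            frob_mul_right _ _ (by
              rw [conjTranspose_pow, conjTranspose_conjTranspose]; exact hpow _)]
      _ = 2 * ‖L₀‖ := by ring
  have hpos : (0:ℝ) < (D : ℝ) + 1 := by positivity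
  calc ((D : ℝ) + 1)⁻¹ * ‖U ^ (D + 1) * L₀ * (Uᴴ) ^ (D + 1) - L₀‖
      ≤ ((D : ℝ) + 1)⁻¹ * (2 * ‖L₀‖) := by
        apply mul_le_mul_of_nonneg_left htri (by positivity)
    _ = (2 / ((D : ℝ) + 1)) * ‖L₀‖ := by field_simp
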